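/- Define b^{(l)}_{w₁,0} = Γ(1+(w₁α₁+β+1)/α₂)/Γ(β₂/α₂) · Γ(l+β₂/α₂)/Γ(l+1+(w₁α₁+β+1)/α₂). Then ∑_{l=1}^∞ b^{(l)}_{w₁,0} = β₂/(w₁α₁+β₁+1). -/

import Mathlib

open Real
open Filter Finset Topology

theorem sum_b0_coeff (α₁ α₂ β₁ β₂ : ℝ) (hα₁ : 0 < α₁) (hα₂ : 0 < α₂)
    (hβ₁ : 0 < β₁) (hβ₂ : 0 < β₂) (w₁ : ℕ) (hw₁ : 1 ≤ w₁)
    (b : ℕ → ℝ)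
    (hb : ∀ l : ℕ,
      b l = Real.Gamma (1 + ((w₁ : ℝ) * α₁ + (β₁ + β₂) + 1) / α₂) /
          Real.Gamma (β₂ / α₂) *
        (Real.Gamma ((l : ℝ) + β₂ / α₂) /
          Real.Gamma ((l : ℝ) + 1 + ((w₁ : ℝ) * α₁ + (β₁ + β₂) + 1) / α₂))) :
    HasSum (fun k : ℕ => b (k + 1))
      (β₂ / ((w₁ : ℝ) * α₁ + β₁ + 1)) := by
  have hwa : 0 < (w₁ : ℝ) * α₁ := by
    have : (1 : ℝ) ≤ (w₁ : ℝ) := by exact_mod_cast hw₁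
    nlinarith
  set c := β₂ / α₂ with hc
  set d := ((w₁ : ℝ) * α₁ + (β₁ + β₂) + 1) / α₂ with hd
  have hc0 : 0 < c := by rw [hc]; positivity
  have hd0 : 0 < d := by rw [hd]; positivity
  set e := d - c with hE
  have heeq : e = ((w₁ : ℝ) * α₁ + β₁ + 1) / α₂ := by
    rw [hE, hc, hd]; ring
  have he0 : 0 < e := by rw [heeq]; positivity
  set F : ℕ → ℝ := fun n => Real.Gamma ((n : ℝ) + 1 + c) / Real.Gamma ((n : ℝ) + 1 + d)
    with hF
  have hFpos : ∀ n, 0 < F n := by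
    intro n
    have h1 : (0 : ℝ) < (n : ℝ) + 1 + c := by positivity
    have h2 : (0 : ℝ) < (n : ℝ) + 1 + d := by positivity
    exact div_pos (Real.Gamma_pos_of_pos h1) (Real.Gamma_pos_of_pos h2)
  have hGc : ∀ n : ℕ, Real.Gamma ((n : ℝ) + 1 + 1 + c) = ((n : ℝ) + 1 + c) * Real.Gamma ((n : ℝ) + 1 + c) := by
    intro n
    have := Real.Gamma_add_one (show ((n : ℝ) + 1 + c) ≠ 0 by positivity)
    rw [← this]; ring_nf
  have hGd : ∀ n : ℕ, Real.Gamma ((n : ℝ) + 1 + 1 + d) = ((n : ℝ) + 1 + d) * Real.Gamma ((n : ℝ) + 1 + d) := by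
    intro n
    have := Real.Gamma_add_one (show ((n : ℝ) + 1 + d) ≠ 0 by positivity)
    rw [← this]; ring_nf
  have hstep : ∀ n : ℕ, F (n + 1) = F n * (((n : ℝ) + 1 + c) / ((n : ℝ) + 1 + d)) := by
    intro n
    have hGd0 : Real.Gamma ((n : ℝ) + 1 + d) ≠ 0 :=
      (Real.Gamma_pos_of_pos (by positivity)).ne'
    have hnd : ((n : ℝ) + 1 + d) ≠ 0 := by positivity
    simp only [hF]
    push_cast
    rw [show ((n : ℝ) + 1) + 1 + c = (n : ℝ) + 1 + 1 + c by ring,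
        show ((n : ℝ) + 1) + 1 + d = (n : ℝ) + 1 + 1 + d by ring, hGc n, hGd n]
    field_simp
  -- K and the telescoping identity
  set K : ℝ := Real.Gamma (1 + d) / Real.Gamma c / e with hK
  have hKpos : 0 < K := by
    apply div_pos (div_pos (Real.Gamma_pos_of_pos (by positivity))
      (Real.Gamma_pos_of_pos hc0)) he0
  have hb' : ∀ k : ℕ, b (k + 1) = K * (F k - F (k + 1)) := by
    intro k
    have h1 : F k - F (k + 1) = F k * (e / ((k : ℝ) + 1 + d)) := by
      rw [hstep k]
      have hnd : ((k : ℝ) + 1 + d) ≠ 0 := by positivity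
      field_simp [hE]
      ring
    rw [hb (k + 1), h1]
    have hGd0 : Real.Gamma ((k : ℝ) + 1 + d) ≠ 0 :=
      (Real.Gamma_pos_of_pos (by positivity)).ne'
    have hnd : ((k : ℝ) + 1 + d) ≠ 0 := by positivity
    have hGc0 : Real.Gamma c ≠ 0 := (Real.Gamma_pos_of_pos hc0).ne'
    have hcast : ((k + 1 : ℕ) : ℝ) = (k : ℝ) + 1 := by push_cast; ring
    rw [hcast, hF]
    have : Real.Gamma ((k : ℝ) + 1 + 1 + d) = ((k : ℝ) + 1 + d) * Real.Gamma ((k : ℝ) + 1 + d) := hGd k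
    rw [this, hK]
    field_simp
  have hFanti : ∀ n, F (n + 1) ≤ F n := by
    intro n
    rw [hstep n]
    have h1 : ((n : ℝ) + 1 + c) / ((n : ℝ) + 1 + d) ≤ 1 := by
      rw [div_le_one (by positivity)]
      nlinarith [he0, hE]
    nlinarith [hFpos n, (div_pos (by positivity : (0:ℝ) < (n:ℝ)+1+c) (by positivity : (0:ℝ) < (n:ℝ)+1+d)), h1]
  have hbnn : ∀ k : ℕ, 0 ≤ b (k + 1) := by
    intro k
    rw [hb' k]
    exact mul_nonneg hKpos.le (by linarith [hFanti k])
  -- F n → 0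
  have hFbound : ∀ n : ℕ,
      F n ≤ F 0 * Real.exp (-e * ∑ k ∈ Finset.range n, 1 / ((k : ℝ) + 1 + d)) := by
    intro n
    induction n with
    | zero => simp
    | succ n ih =>
      rw [hstep n, Finset.sum_range_succ]
      have h1 : ((n : ℝ) + 1 + c) / ((n : ℝ) + 1 + d) ≤ Real.exp (-(e / ((n : ℝ) + 1 + d))) := by
        have h2 : 1 - e / ((n : ℝ) + 1 + d) ≤ Real.exp (-(e / ((n : ℝ) + 1 + d))) := by
          have := Real.add_one_le_exp (-(e / ((n : ℝ) + 1 + d)))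
          linarith
        have h3 : ((n : ℝ) + 1 + c) / ((n : ℝ) + 1 + d) = 1 - e / ((n : ℝ) + 1 + d) := by
          have hnd : ((n : ℝ) + 1 + d) ≠ 0 := by positivity
          field_simp [hE]
          ring
        rw [h3]; exact h2
      calc F n * (((n : ℝ) + 1 + c) / ((n : ℝ) + 1 + d))
          ≤ (F 0 * Real.exp (-e * ∑ k ∈ Finset.range n, 1 / ((k : ℝ) + 1 + d))) *
              Real.exp (-(e / ((n : ℝ) + 1 + d))) := by
            apply mul_le_mul ih h1 (by positivity) (by positivity)
        _ = F 0 * Real.exp (-e * (∑ k ∈ Finset.range n, 1 / ((k : ℝ) + 1 + d) +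
              1 / ((n : ℝ) + 1 + d))) := by
            rw [mul_assoc, ← Real.exp_add]
            congr 1
            congr 1
            field_simp
            ring
  have hStop : Tendsto (fun n : ℕ => ∑ k ∈ Finset.range n, 1 / ((k : ℝ) + 1 + d)) atTop atTop := by
    have hcomp : ∀ n : ℕ, (1 / (1 + d)) * ∑ k ∈ Finset.range n, (1 / ((k : ℝ) + 1)) ≤
        ∑ k ∈ Finset.range n, 1 / ((k : ℝ) + 1 + d) := by
      intro n
      rw [Finset.mul_sum]
      apply Finset.sum_le_sum
      intro k _
      rw [div_mul_div_comm, one_mul]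
      apply one_div_le_one_div_of_le (by positivity)
      nlinarith [hd0, (Nat.cast_nonneg k : (0:ℝ) ≤ k)]
    have h1 : Tendsto (fun n : ℕ => (1 / (1 + d)) * ∑ k ∈ Finset.range n, (1 / ((k : ℝ) + 1)))
        atTop atTop := by
      apply Tendsto.const_mul_atTop (by positivity)
      exact tendsto_sum_range_one_div_nat_succ_atTop
    exact tendsto_atTop_mono hcomp h1
  have hFlim : Tendsto F atTop (𝓝 0) := by
    have hub : Tendsto (fun n : ℕ =>
        F 0 * Real.exp (-e * ∑ k ∈ Finset.range n, 1 / ((k : ℝ) + 1 + d))) atTop (𝓝 0) := by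
      rw [show (0:ℝ) = F 0 * 0 by ring]
      apply Tendsto.const_mul
      apply Real.tendsto_exp_atBot.comp
      apply Tendsto.const_mul_atTop_of_neg (by linarith : -e < 0) hStop
    exact squeeze_zero (fun n => (hFpos n).le) hFbound hub
  -- partial sums
  have hpartial : ∀ n : ℕ, ∑ k ∈ Finset.range n, b (k + 1) = K * (F 0 - F n) := by
    intro n
    calc ∑ k ∈ Finset.range n, b (k + 1) = ∑ k ∈ Finset.range n, K * (F k - F (k + 1)) := by
          exact Finset.sum_congr rfl fun k _ => hb' k
      _ = K * ∑ k ∈ Finset.range n, (F k - F (k + 1)) := by rw [Finset.mul_sum]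
      _ = K * (F 0 - F n) := by rw [Finset.sum_range_sub' F n]
  have htend : Tendsto (fun n : ℕ => ∑ k ∈ Finset.range n, b (k + 1)) atTop (𝓝 (K * F 0)) := by
    simp only [hpartial]
    rw [show K * F 0 = K * (F 0 - 0) by ring]
    exact (tendsto_const_nhds.sub hFlim).const_mul K
  have hval : K * F 0 = β₂ / ((w₁ : ℝ) * α₁ + β₁ + 1) := by
    have hF0 : F 0 = Real.Gamma (1 + c) / Real.Gamma (1 + d) := by
      simp [hF]
    have hG1c : Real.Gamma (1 + c) = c * Real.Gamma c := by
      rw [add_comm, Real.Gamma_add_one hc0.ne']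
    rw [hK, hF0, hG1c]
    have hGc0 : Real.Gamma c ≠ 0 := (Real.Gamma_pos_of_pos hc0).ne'
    have hGd0 : Real.Gamma (1 + d) ≠ 0 := (Real.Gamma_pos_of_pos (by positivity)).ne'
    have h2 : ((w₁ : ℝ) * α₁ + β₁ + 1) ≠ 0 := by positivity
    have h3 : e ≠ 0 := he0.ne'
    have h4 : c / e = β₂ / ((w₁ : ℝ) * α₁ + β₁ + 1) := by
      rw [hc, heeq]
      rw [div_div_div_eq]
      rw [mul_comm β₂ α₂, mul_div_mul_left _ _ hα₂.ne']
    rw [← h4]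
    field_simp
  rw [← hval]
  exact (hasSum_iff_tendsto_nat_of_nonneg hbnn _).mpr htend
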